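/- Let l be odd with 2^k < l < 2^{k+1}. Then for every m ≥ 1 and every integer a with 0 ≤ a < 2^{k+1} − l, we have ν₂(A_{l, 2^{k+1}m + a}) = ν₂(A_{l, 2^{k+1}m − a − 1}). -/

import Mathlib

open Finset

/-- The 2-adic valuation of `A_{l,n}`, given by `ν₂(A_{l,n}) = l + Σ_{j=-l+1}^{l} ν₂(n+j)`. -/
noncomputable def nuA (l : ℕ) (n : ℤ) : ℕ :=
  l + ∑ j ∈ Finset.Icc (-(l : ℤ) + 1) (l : ℤ), padicValInt 2 (n + j)

lemma padicValInt_neg (p : ℕ) (t : ℤ) : padicValInt p (-t) = padicValInt p t := by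
  simp [padicValInt]

lemma val_add_of_dvd {t z : ℤ} (ht : t ≠ 0)
    (h : (2 : ℤ) ^ (padicValInt 2 t + 1) ∣ z) :
    padicValInt 2 (z + t) = padicValInt 2 t := by
  haveI : Fact (Nat.Prime 2) := ⟨Nat.prime_two⟩
  set v := padicValInt 2 t with hv
  have hdvd : (2 : ℤ) ^ v ∣ t := padicValInt_dvd t
  have hndvd : ¬ (2 : ℤ) ^ (v + 1) ∣ t := by
    intro hc
    rcases (padicValInt_dvd_iff (p := 2) (v + 1) t).mp hc with h0 | hle
    · exact ht h0
    · omega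
  have hz : (2 : ℤ) ^ v ∣ z := dvd_trans (pow_dvd_pow 2 (Nat.le_succ v)) h
  have hsum : (2 : ℤ) ^ v ∣ z + t := dvd_add hz hdvd
  have hne : z + t ≠ 0 := by
    intro hc
    apply hndvd
    have : t = -z := by linarith [hc]
    rw [this]
    exact dvd_neg.mpr h
  have hnsum : ¬ (2 : ℤ) ^ (v + 1) ∣ z + t := by
    intro hc
    exact hndvd (by simpa using dvd_sub hc h)
  have h1 : v ≤ padicValInt 2 (z + t) := by
    rcases (padicValInt_dvd_iff (p := 2) v (z + t)).mp hsum with h0 | hle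
    · exact absurd h0 hne
    · exact hle
  have h2 : ¬ (v + 1 ≤ padicValInt 2 (z + t)) := by
    intro hc
    exact hnsum ((padicValInt_dvd_iff (p := 2) (v + 1) (z + t)).mpr (Or.inr hc))
  omega

lemma val_reflect (k m : ℕ) (hm : 1 ≤ m) (t : ℤ) (htabs : |t| < 2 ^ (k + 1)) :
    padicValInt 2 ((2 : ℤ) ^ (k + 1) * m + t) = padicValInt 2 ((2 : ℤ) ^ (k + 1) * m - t) := by
  rcases eq_or_ne t 0 with rfl | ht
  · simp
  · have hvle : padicValInt 2 t ≤ k := by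
      by_contra hgt
      push_neg at hgt
      have hdvd : (2 : ℤ) ^ (k + 1) ∣ t :=
        dvd_trans (pow_dvd_pow 2 hgt) (padicValInt_dvd t)
      have h2 : (2 : ℤ) ^ (k + 1) ≤ |t| :=
        Int.le_of_dvd (abs_pos.mpr ht) ((dvd_abs _ _).mpr hdvd)
      omega
    have hdz : (2 : ℤ) ^ (padicValInt 2 t + 1) ∣ (2 : ℤ) ^ (k + 1) * m :=
      dvd_mul_of_dvd_left (pow_dvd_pow 2 (by omega)) _
    have h1 : padicValInt 2 ((2 : ℤ) ^ (k + 1) * m + t) = padicValInt 2 t :=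
      val_add_of_dvd ht hdz
    have h2 : padicValInt 2 ((2 : ℤ) ^ (k + 1) * m + -t) = padicValInt 2 (-t) :=
      val_add_of_dvd (neg_ne_zero.mpr ht) (by rwa [padicValInt_neg])
    rw [h1, sub_eq_add_neg, h2, padicValInt_neg]

theorem nuA_reflection (l k : ℕ) (hl : Odd l) (hlo : 2 ^ k < l) (hhi : l < 2 ^ (k + 1))
    (m : ℕ) (hm : 1 ≤ m) (a : ℕ) (ha : a < 2 ^ (k + 1) - l) :
    nuA l (2 ^ (k + 1) * m + a) = nuA l (2 ^ (k + 1) * m - a - 1) := by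
  unfold nuA
  congr 1
  refine Finset.sum_nbij' (fun j => 1 - j) (fun j => 1 - j) ?_ ?_ ?_ ?_ ?_
  · intro j hj; simp only [Finset.mem_Icc] at hj ⊢; omega
  · intro j hj; simp only [Finset.mem_Icc] at hj ⊢; omega
  · intro j _; ring
  · intro j _; ring
  · intro j hj
    simp only [Finset.mem_Icc] at hj
    have hal : (a : ℤ) + l < 2 ^ (k + 1) := by
      have : a + l < 2 ^ (k + 1) := by omega
      exact_mod_cast this
    have habs : |(a : ℤ) + j| < 2 ^ (k + 1) := by
      rw [abs_lt]
      constructor <;> [nlinarith [hj.1]; nlinarith [hj.2]]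
    have := val_reflect k m hm ((a : ℤ) + j) habs
    have e1 : (2 : ℤ) ^ (k + 1) * m + a + j = (2 : ℤ) ^ (k + 1) * m + ((a : ℤ) + j) := by ring
    have e2 : (2 : ℤ) ^ (k + 1) * m - a - 1 + (1 - j) = (2 : ℤ) ^ (k + 1) * m - ((a : ℤ) + j) := by
      ring
    rw [e1, e2, this]
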